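/- The function (ρ, p) ↦ -ρ·s(ρ,p) = -(ρ/(γ-1))·log(p/ρ^γ) is convex on the set {(ρ,p) : ρ > 0, p > 0}, where γ > 1. -/

import Mathlib

open Real

-- log-sum inequality core
lemma kl_ineq (a b ρ1 p1 ρ2 p2 : ℝ) (ha : 0 ≤ a) (hb : 0 ≤ b) (hab : a + b = 1)
    (hρ1 : 0 < ρ1) (hp1 : 0 < p1) (hρ2 : 0 < ρ2) (hp2 : 0 < p2) :
    (a * ρ1 + b * ρ2) * Real.log ((a * ρ1 + b * ρ2) / (a * p1 + b * p2)) ≤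
      a * (ρ1 * Real.log (ρ1 / p1)) + b * (ρ2 * Real.log (ρ2 / p2)) := by
  rcases ha.eq_or_lt with rfl | ha
  · have hb1 : b = 1 := by linarith
    simp [hb1]
  rcases hb.eq_or_lt with rfl | hb
  · have ha1 : a = 1 := by linarith
    simp [ha1]
  set ρ := a * ρ1 + b * ρ2 with hρdef
  set p := a * p1 + b * p2 with hpdef
  have hρ : 0 < ρ := by positivity
  have hp : 0 < p := by positivity
  have h1 : Real.log (ρ / p) - Real.log (ρ1 / p1) ≤ (ρ * p1) / (p * ρ1) - 1 := by
    have := Real.log_le_sub_one_of_pos (show 0 < (ρ / p) / (ρ1 / p1) by positivity)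
    rw [Real.log_div (by positivity) (by positivity)] at this
    have e : (ρ / p) / (ρ1 / p1) = (ρ * p1) / (p * ρ1) := by
      field_simp
    linarith [this, e ▸ this]
  have h2 : Real.log (ρ / p) - Real.log (ρ2 / p2) ≤ (ρ * p2) / (p * ρ2) - 1 := by
    have := Real.log_le_sub_one_of_pos (show 0 < (ρ / p) / (ρ2 / p2) by positivity)
    rw [Real.log_div (by positivity) (by positivity)] at this
    have e : (ρ / p) / (ρ2 / p2) = (ρ * p2) / (p * ρ2) := by
      field_simp
    linarith [this, e ▸ this]
  have k1 : a * ρ1 * (Real.log (ρ / p) - Real.log (ρ1 / p1)) ≤ a * ρ * p1 / p - a * ρ1 := by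
    have := mul_le_mul_of_nonneg_left h1 (le_of_lt (mul_pos ha hρ1))
    have e : a * ρ1 * ((ρ * p1) / (p * ρ1) - 1) = a * ρ * p1 / p - a * ρ1 := by
      field_simp
    linarith [e ▸ this]
  have k2 : b * ρ2 * (Real.log (ρ / p) - Real.log (ρ2 / p2)) ≤ b * ρ * p2 / p - b * ρ2 := by
    have := mul_le_mul_of_nonneg_left h2 (le_of_lt (mul_pos hb hρ2))
    have e : b * ρ2 * ((ρ * p2) / (p * ρ2) - 1) = b * ρ * p2 / p - b * ρ2 := by
      field_simp
    linarith [e ▸ this]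
  have sum0 : a * ρ * p1 / p + b * ρ * p2 / p = ρ := by
    rw [← add_div, div_eq_iff (ne_of_gt hp)]
    rw [hpdef]; ring
  nlinarith [k1, k2, sum0]

lemma S_convex : Convex ℝ {x : ℝ × ℝ | 0 < x.1 ∧ 0 < x.2} := by
  have : {x : ℝ × ℝ | 0 < x.1 ∧ 0 < x.2} = Set.Ioi (0:ℝ) ×ˢ Set.Ioi (0:ℝ) := by
    ext x; simp [Set.mem_prod]
  rw [this]
  exact (convex_Ioi 0).prod (convex_Ioi 0)

lemma kl_convex : ConvexOn ℝ {x : ℝ × ℝ | 0 < x.1 ∧ 0 < x.2}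
    (fun x : ℝ × ℝ => x.1 * Real.log (x.1 / x.2)) := by
  refine ⟨S_convex, fun x hx y hy a b ha hb hab => ?_⟩
  simp only [Prod.smul_fst, Prod.smul_snd, Prod.fst_add, Prod.snd_add, smul_eq_mul]
  exact kl_ineq a b x.1 x.2 y.1 y.2 ha hb hab hx.1 hx.2 hy.1 hy.2

lemma xlogx_convex : ConvexOn ℝ {x : ℝ × ℝ | 0 < x.1 ∧ 0 < x.2}
    (fun x : ℝ × ℝ => x.1 * Real.log x.1) := by
  have h := (Real.convexOn_mul_log).comp_linearMap (LinearMap.fst ℝ ℝ ℝ)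
  refine h.subset ?_ S_convex
  intro x hx
  exact le_of_lt hx.1

theorem neg_entropy_convex (γ : ℝ) (hγ : 1 < γ) :
    ConvexOn ℝ {x : ℝ × ℝ | 0 < x.1 ∧ 0 < x.2}
      (fun x => -(x.1 / (γ - 1)) * Real.log (x.2 / x.1 ^ γ)) := by
  have hγ1 : (0:ℝ) < γ - 1 := by linarith
  have hg : ConvexOn ℝ {x : ℝ × ℝ | 0 < x.1 ∧ 0 < x.2}
      (fun x : ℝ × ℝ => x.1 * Real.log x.1 + (1/(γ-1)) * (x.1 * Real.log (x.1 / x.2))) := by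
    have := xlogx_convex.add (kl_convex.smul (by positivity : (0:ℝ) ≤ 1/(γ-1)))
    exact this
  have heq : ∀ z ∈ {x : ℝ × ℝ | 0 < x.1 ∧ 0 < x.2},
      -(z.1 / (γ - 1)) * Real.log (z.2 / z.1 ^ γ)
        = z.1 * Real.log z.1 + (1/(γ-1)) * (z.1 * Real.log (z.1 / z.2)) := by
    intro z hz
    obtain ⟨hz1, hz2⟩ := hz
    rw [Real.log_div (ne_of_gt hz2) (by positivity), Real.log_rpow hz1,
        Real.log_div (ne_of_gt hz1) (ne_of_gt hz2)]
    field_simp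
    ring
  refine ⟨S_convex, fun x hx y hy a b ha hb hab => ?_⟩
  have hmem := S_convex hx hy ha hb hab
  simp only [smul_eq_mul]
  rw [heq _ hmem, heq _ hx, heq _ hy]
  exact hg.2 hx hy ha hb hab
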